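/- The number of ascent sequences of length n avoiding 012 that have exactly k ascents is binomial(n, 2k). -/

import Mathlib

/-- Number of ascents (adjacent strict rises) in a list of naturals. -/
def ascList (l : List ℕ) : ℕ :=
  (l.zip l.tail).countP (fun p => decide (p.1 < p.2))

/-- `l` is an ascent sequence: nonempty, starts with 0, and each later letter is at most
one more than the number of ascents in the preceding prefix. -/
def IsAscSeq (l : List ℕ) : Prop :=
  l ≠ [] ∧ l.getD 0 0 = 0 ∧
    ∀ i, 0 < i → i < l.length → l.getD i 0 ≤ ascList (l.take i) + 1

/-- A sequence contains the pattern 012. -/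
def Contains012 (l : List ℕ) : Prop :=
  ∃ i j k, i < j ∧ j < k ∧ k < l.length ∧
    l.getD i 0 < l.getD j 0 ∧ l.getD j 0 < l.getD k 0

/-- Binary words of length `n` starting with `j` having `k` ascents. -/
def BW (n j k : ℕ) : Set (List ℕ) :=
  {l | l.length = n ∧ (∀ x ∈ l, x ≤ 1) ∧ l.head? = some j ∧ ascList l = k}

lemma ascList_nil : ascList [] = 0 := rfl

lemma ascList_single (a : ℕ) : ascList [a] = 0 := rfl

lemma ascList_cons_cons (a b : ℕ) (t : List ℕ) :
    ascList (a :: b :: t) = (if a < b then 1 else 0) + ascList (b :: t) := by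
  simp only [ascList, List.tail_cons, List.zip_cons_cons, List.countP_cons]
  by_cases h : a < b <;> simp [h] <;> omega

lemma exists_ascent {m : List ℕ} (h : 0 < ascList m) :
    ∃ a, a + 1 < m.length ∧ m.getD a 0 < m.getD (a + 1) 0 := by
  rw [ascList, List.countP_pos_iff] at h
  obtain ⟨p, hp, hlt⟩ := h
  obtain ⟨a, ha, hpa⟩ := List.mem_iff_getElem.mp hp
  have hlen : a < m.tail.length := by
    have := ha; rw [List.length_zip] at this; omega
  have hlen' : a + 1 < m.length := by
    have := hlen; rw [List.length_tail] at this; omega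
  refine ⟨a, hlen', ?_⟩
  have hz : (m.zip m.tail)[a] = (m[a], m.tail[a]) := List.getElem_zip
  rw [hz] at hpa
  have h2 : m.tail[a] = m[a + 1] := List.getElem_tail hlen
  have hav : m[a] < m[a+1] := by
    have := hpa ▸ hlt
    simp only [decide_eq_true_eq] at hlt
    rw [← hpa] at hlt
    simpa [hz, h2] using hlt
  rw [List.getD_eq_getElem m 0 (by omega), List.getD_eq_getElem m 0 hlen']
  exact hav

/-- Finiteness of bounded-length binary lists. -/
lemma finite_binary (n : ℕ) : {l : List ℕ | l.length = n ∧ ∀ x ∈ l, x ≤ 1}.Finite := by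
  induction n with
  | zero =>
      apply Set.Finite.subset (Set.finite_singleton ([] : List ℕ))
      intro l hl
      simp only [Set.mem_setOf_eq] at hl
      simp [List.length_eq_zero_iff.mp hl.1]
  | succ n ih =>
      apply Set.Finite.subset (Set.Finite.union (ih.image (fun t => 0 :: t))
        (ih.image (fun t => 1 :: t)))
      rintro l ⟨hlen, hbd⟩
      match l with
      | a :: t =>
        have ha : a ≤ 1 := hbd a (by simp)
        have ht : t.length = n ∧ ∀ x ∈ t, x ≤ 1 :=
          ⟨by simpa using hlen, fun x hx => hbd x (by simp [hx])⟩
        interval_cases a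
        · exact Or.inl ⟨t, ht, rfl⟩
        · exact Or.inr ⟨t, ht, rfl⟩

lemma BW_finite (n j k : ℕ) : (BW n j k).Finite :=
  (finite_binary n).subset (fun l hl => ⟨hl.1, hl.2.1⟩)

lemma cons_injective (j : ℕ) : Function.Injective (fun t : List ℕ => j :: t) := by
  intro a b h; simpa using h

lemma mem_BW_cons {n j k : ℕ} {l : List ℕ} (hn : 1 ≤ n) (hj : j ≤ 1) :
    l ∈ BW (n + 1) j k ↔ ∃ b t, l = j :: b :: t ∧ b ≤ 1 ∧
      (b :: t) ∈ BW n b (k - (if j < b then 1 else 0)) ∧ (if j < b then 1 else 0) ≤ k := by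
  constructor
  · rintro ⟨hlen, hbd, hhead, hasc⟩
    rcases l with _ | ⟨a, t⟩
    · simp at hhead
    · have haj : j = a := by symm; simpa using hhead
      subst haj
      rcases t with _ | ⟨b, t'⟩
      · simp at hlen; omega
      · have hasc' := ascList_cons_cons j b t'
        have hb : b ≤ 1 := hbd b (by simp)
        have hlen' : (b :: t').length = n := by simpa using hlen
        have hbd' : ∀ x ∈ b :: t', x ≤ 1 := fun x hx => hbd x (by simp [hx])
        by_cases hjb : j < b
        · rw [if_pos hjb] at hasc'
          refine ⟨b, t', rfl, hb, ⟨hlen', hbd', by simp, ?_⟩, ?_⟩ <;>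
            rw [if_pos hjb] <;> omega
        · rw [if_neg hjb] at hasc'
          refine ⟨b, t', rfl, hb, ⟨hlen', hbd', by simp, ?_⟩, ?_⟩ <;>
            rw [if_neg hjb] <;> omega
  · rintro ⟨b, t, rfl, hb, ⟨hlen, hbd, hhead, hasc⟩, hk⟩
    have hasc' := ascList_cons_cons j b t
    refine ⟨by simpa using hlen, ?_, by simp, ?_⟩
    · intro x hx
      rcases List.mem_cons.mp hx with h | h
      · subst h; exact hj
      · exact hbd x h
    · by_cases hjb : j < b
      · rw [if_pos hjb] at hk hasc hasc'; omega
      · rw [if_neg hjb] at hk hasc hasc'; omega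

lemma BW_succ_zero_zero {n : ℕ} (hn : 1 ≤ n) :
    BW (n + 1) 0 0 = (fun t => 0 :: t) '' (BW n 0 0) := by
  ext l
  rw [mem_BW_cons hn (by norm_num)]
  constructor
  · rintro ⟨b, t, rfl, hb, hmem, hk⟩
    interval_cases b
    · exact ⟨0 :: t, by simpa using hmem, rfl⟩
    · simp at hk
  · rintro ⟨t, hmem, rfl⟩
    have hne : t ≠ [] := by
      intro h; subst h; have := hmem.1; simp at this; omega
    match t with
    | b :: t' =>
      have hb : b = 0 := by have := hmem.2.2.1; simpa using this
      subst hb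
      exact ⟨0, t', rfl, by norm_num, by simpa using hmem, by simp⟩

lemma BW_succ_zero_succ {n k : ℕ} (hn : 1 ≤ n) :
    BW (n + 1) 0 (k + 1) = (fun t => 0 :: t) '' (BW n 0 (k + 1) ∪ BW n 1 k) := by
  ext l
  rw [mem_BW_cons hn (by norm_num)]
  constructor
  · rintro ⟨b, t, rfl, hb, hmem, hk⟩
    interval_cases b
    · exact ⟨0 :: t, Or.inl (by simpa using hmem), rfl⟩
    · exact ⟨1 :: t, Or.inr (by simpa using hmem), rfl⟩
  · rintro ⟨t, hmem, rfl⟩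
    rcases hmem with hmem | hmem
    · match t with
      | [] => have := hmem.1; simp at this; omega
      | b :: t' =>
        have hb : b = 0 := by have := hmem.2.2.1; simpa using this
        subst hb
        exact ⟨0, t', rfl, by norm_num, by simpa using hmem, by simp⟩
    · match t with
      | [] => have := hmem.1; simp at this; omega
      | b :: t' =>
        have hb : b = 1 := by have := hmem.2.2.1; simpa using this
        subst hb
        exact ⟨1, t', rfl, le_refl 1, by simpa using hmem, by simp⟩

lemma BW_succ_one {n k : ℕ} (hn : 1 ≤ n) :
    BW (n + 1) 1 k = (fun t => 1 :: t) '' (BW n 0 k ∪ BW n 1 k) := by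
  ext l
  rw [mem_BW_cons hn (by norm_num)]
  constructor
  · rintro ⟨b, t, rfl, hb, hmem, hk⟩
    interval_cases b
    · exact ⟨0 :: t, Or.inl (by simpa using hmem), rfl⟩
    · exact ⟨1 :: t, Or.inr (by simpa using hmem), rfl⟩
  · rintro ⟨t, hmem, rfl⟩
    rcases hmem with hmem | hmem
    · match t with
      | [] => have := hmem.1; simp at this; omega
      | b :: t' =>
        have hb : b = 0 := by have := hmem.2.2.1; simpa using this
        subst hb
        exact ⟨0, t', rfl, by norm_num, by simpa using hmem, by simp⟩
    · match t with
      | [] => have := hmem.1; simp at this; omega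
      | b :: t' =>
        have hb : b = 1 := by have := hmem.2.2.1; simpa using this
        subst hb
        exact ⟨1, t', rfl, le_refl 1, by simpa using hmem, by simp⟩

lemma BW_one (j k : ℕ) (hj : j ≤ 1) : BW 1 j k = if k = 0 then {[j]} else ∅ := by
  ext l
  constructor
  · rintro ⟨hlen, hbd, hhead, hasc⟩
    rcases l with _ | ⟨a, t⟩
    · simp at hlen
    · rcases t with _ | ⟨b, t'⟩
      · have : a = j := by simpa using hhead
        subst this
        have : k = 0 := by simpa [ascList_single] using hasc.symm
        simp [this]
      · simp at hlen
  · intro hl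
    by_cases hk : k = 0
    · subst hk
      simp only [if_pos rfl, Set.mem_singleton_iff] at hl
      subst hl
      exact ⟨rfl, by simpa using hj, rfl, rfl⟩
    · simp [hk] at hl

lemma BW_disjoint_01 (n k k' : ℕ) : Disjoint (BW n 0 k) (BW n 1 k') := by
  rw [Set.disjoint_iff_inter_eq_empty]
  ext l
  simp only [Set.mem_inter_iff, Set.mem_empty_iff_false, iff_false]
  rintro ⟨h0, h1⟩
  have := h0.2.2.1
  have := h1.2.2.1
  simp_all

lemma BW_card : ∀ n, 1 ≤ n → ∀ k, (BW n 0 k).ncard = n.choose (2 * k) ∧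
    (BW n 1 k).ncard = n.choose (2 * k + 1) := by
  intro n
  induction n with
  | zero => omega
  | succ n ih =>
      intro _ k
      rcases Nat.eq_zero_or_pos n with hn | hn
      · subst hn
        rcases Nat.eq_zero_or_pos k with hk | hk
        · subst hk
          rw [BW_one 0 0 (by norm_num), BW_one 1 0 (le_refl 1)]
          simp
        · rw [BW_one 0 k (by norm_num), BW_one 1 k (le_refl 1)]
          rw [if_neg (by omega), if_neg (by omega)]
          simp only [Set.ncard_empty]
          rw [Nat.choose_eq_zero_of_lt (by omega), Nat.choose_eq_zero_of_lt (by omega)]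
          simp
      · have ih' := ih hn
        constructor
        · rcases Nat.eq_zero_or_pos k with hk | hk
          · subst hk
            rw [BW_succ_zero_zero hn, Set.ncard_image_of_injective _ (cons_injective 0)]
            simp [(ih' 0).1]
          · obtain ⟨k', rfl⟩ := Nat.exists_eq_add_of_le hk
            rw [show 1 + k' = k' + 1 by omega]
            rw [BW_succ_zero_succ hn, Set.ncard_image_of_injective _ (cons_injective 0),
              Set.ncard_union_eq (BW_disjoint_01 n (k'+1) k') (BW_finite _ _ _) (BW_finite _ _ _),
              (ih' (k'+1)).1, (ih' k').2]
            have : 2 * (k' + 1) = (2 * k' + 1) + 1 := by ring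
            rw [this, Nat.choose_succ_succ']
            omega
        · rw [BW_succ_one hn, Set.ncard_image_of_injective _ (cons_injective 1),
            Set.ncard_union_eq (BW_disjoint_01 n k k) (BW_finite _ _ _) (BW_finite _ _ _),
            (ih' k).1, (ih' k).2, Nat.choose_succ_succ']

/-- Characterization: 012-avoiding ascent sequences are binary words starting with 0. -/
lemma char_lemma (n k : ℕ) (hn : 1 ≤ n) :
    {l : List ℕ | l.length = n ∧ IsAscSeq l ∧ ¬ Contains012 l ∧ ascList l = k} = BW n 0 k := by
  ext l
  simp only [Set.mem_setOf_eq]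
  constructor
  · rintro ⟨hlen, ⟨hne, hhead, hbound⟩, havoid, hasc⟩
    have key : ∀ i, i < l.length → l.getD i 0 ≤ 1 := by
      intro i
      induction i using Nat.strong_induction_on with
      | _ i ihi =>
        intro hi
        rcases Nat.eq_zero_or_pos i with h0 | h0
        · subst h0; omega
        · by_contra hcon
          push_neg at hcon
          have h2 : 2 ≤ l.getD i 0 := hcon
          have hb := hbound i h0 hi
          have hpos : 0 < ascList (l.take i) := by omega
          obtain ⟨a, ha, hlt⟩ := exists_ascent hpos
          have htl : (l.take i).length = i := by
            rw [List.length_take]; omega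
          rw [htl] at ha
          have e1 : (l.take i).getD a 0 = l.getD a 0 := by
            rw [List.getD_eq_getElem _ 0 (by rw [htl]; omega),
              List.getD_eq_getElem _ 0 (by omega : a < l.length)]
            exact List.getElem_take
          have e2 : (l.take i).getD (a+1) 0 = l.getD (a+1) 0 := by
            rw [List.getD_eq_getElem _ 0 (by rw [htl]; omega),
              List.getD_eq_getElem _ 0 (by omega : a + 1 < l.length)]
            exact List.getElem_take
          rw [e1, e2] at hlt
          have ha1 : l.getD (a+1) 0 ≤ 1 := ihi (a+1) (by omega) (by omega)
          exact havoid ⟨a, a+1, i, by omega, by omega, hi, hlt, by omega⟩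
    refine ⟨hlen, ?_, ?_, hasc⟩
    · intro x hx
      obtain ⟨i, hi, rfl⟩ := List.mem_iff_getElem.mp hx
      have := key i hi
      rwa [List.getD_eq_getElem _ 0 hi] at this
    · match l with
      | a :: t =>
        have : a = 0 := by simpa using hhead
        simp [this]
  · rintro ⟨hlen, hbd, hhead, hasc⟩
    have hne : l ≠ [] := by intro h; subst h; simp at hhead
    have hh0 : l.getD 0 0 = 0 := by
      match l with
      | a :: t => have : a = 0 := by simpa using hhead
                  simp [this]
    refine ⟨hlen, ⟨hne, hh0, ?_⟩, ?_, hasc⟩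
    · intro i _ hi
      have : l.getD i 0 ≤ 1 := by
        rw [List.getD_eq_getElem _ 0 hi]
        exact hbd _ (List.getElem_mem hi)
      omega
    · rintro ⟨i, j, m, hij, hjm, hm, h1, h2⟩
      have hbi : l.getD j 0 ≤ 1 := by
        rw [List.getD_eq_getElem _ 0 (by omega)]
        exact hbd _ (List.getElem_mem (by omega))
      have hbm : l.getD m 0 ≤ 1 := by
        rw [List.getD_eq_getElem _ 0 hm]
        exact hbd _ (List.getElem_mem hm)
      omega

/-- The number of 012-avoiding ascent sequences of length `n` with `k` ascents is
`n.choose (2k)`. -/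
theorem stmt8 (n k : ℕ) (hn : 1 ≤ n) :
    {l : List ℕ | l.length = n ∧ IsAscSeq l ∧ ¬ Contains012 l ∧ ascList l = k}.ncard
      = n.choose (2 * k) := by
  rw [char_lemma n k hn]
  exact (BW_card n hn k).1
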